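/- Let (Ω, m) be a σ-finite Borel measure space with a measurable measure-preserving ℝ-flow (a_t). Suppose that for m-a.e. x ∈ Ω there exists a compact subset B (depending on x) with ∫_{-∞}^{∞} 1_B(x·a_t) dt = ∞. Then the flow (Ω, (a_t), m) is completely conservative. -/

import Mathlib

open MeasureTheory
open scoped ENNReal

/-- Criterion for complete conservativity: if almost every point has a compact
set in which its orbit spends infinite time, then there is no wandering set of
positive measure (here `Ω` is second countable locally compact Hausdorff and
`m` is a Radon measure). -/
theorem stmt_14 {Ω : Type*} [TopologicalSpace Ω] [MeasurableSpace Ω] [BorelSpace Ω]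
    [SecondCountableTopology Ω] [LocallyCompactSpace Ω] [T2Space Ω]
    (m : Measure Ω) [SigmaFinite m] [m.Regular]
    (a : ℝ → Ω → Ω) (hmeas : Measurable fun p : ℝ × Ω => a p.1 p.2)
    (h0 : ∀ x, a 0 x = x) (hadd : ∀ s t : ℝ, ∀ x, a (s + t) x = a s (a t x))
    (hmp : ∀ t, MeasurePreserving (a t) m m)
    (hrec : ∀ᵐ x ∂m, ∃ B : Set Ω, IsCompact B ∧
      ∫⁻ t : ℝ, B.indicator (fun _ => (1:ℝ≥0∞)) (a t x) = ⊤) :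
    ∀ B : Set Ω, MeasurableSet B →
      (∀ᵐ x ∂m.restrict B, ∫⁻ t : ℝ, B.indicator (fun _ => (1:ℝ≥0∞)) (a t x) < ⊤) →
      m B = 0 := by
  intro B hBmeas hBfin
  by_contra hB0
  -- occupation time functional
  set f : Set Ω → Ω → ℝ≥0∞ :=
    fun S x => ∫⁻ t : ℝ, S.indicator (fun _ => (1:ℝ≥0∞)) (a t x) with hfdef
  -- basic group facts
  have hcancel : ∀ (s : ℝ) (x : Ω), a s (a (-s) x) = x := by
    intro s x
    rw [← hadd, add_neg_cancel, h0]
  -- measurability helpers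
  have hindm : ∀ {S : Set Ω}, MeasurableSet S →
      Measurable (S.indicator (fun _ => (1:ℝ≥0∞))) :=
    fun hS => measurable_const.indicator hS
  have hfix : ∀ {S : Set Ω}, MeasurableSet S → ∀ x : Ω,
      Measurable (fun t : ℝ => S.indicator (fun _ => (1:ℝ≥0∞)) (a t x)) := by
    intro S hS x
    exact (hindm hS).comp (hmeas.comp (measurable_id.prodMk measurable_const))
  have hfmeas : ∀ {S : Set Ω}, MeasurableSet S → Measurable (f S) := by
    intro S hS
    have h1 : Measurable (fun p : Ω × ℝ => S.indicator (fun _ => (1:ℝ≥0∞)) (a p.2 p.1)) :=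
      (hindm hS).comp (hmeas.comp measurable_swap)
    exact h1.lintegral_prod_right'
  -- invariance under the flow
  have hfinv : ∀ {S : Set Ω}, MeasurableSet S → ∀ (s : ℝ) (x : Ω),
      f S (a s x) = f S x := by
    intro S hS s x
    have h1 : (fun t : ℝ => S.indicator (fun _ => (1:ℝ≥0∞)) (a t (a s x)))
        = fun t : ℝ => S.indicator (fun _ => (1:ℝ≥0∞)) (a (t + s) x) := by
      funext t; rw [← hadd]
    calc f S (a s x) = ∫⁻ t : ℝ, S.indicator (fun _ => (1:ℝ≥0∞)) (a (t + s) x) := by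
          rw [hfdef]; exact congrArg (fun g => ∫⁻ t : ℝ, g t) h1
      _ = f S x := (measurePreserving_add_right volume s).lintegral_comp (hfix hS x)
  -- change of variables t ↦ -t
  have hfneg : ∀ {S : Set Ω}, MeasurableSet S → ∀ x : Ω,
      (∫⁻ t : ℝ, S.indicator (fun _ => (1:ℝ≥0∞)) (a (-t) x)) = f S x := by
    intro S hS x
    exact (Measure.measurePreserving_neg volume).lintegral_comp (hfix hS x)
  -- Fubini with time change σ
  have hswap : ∀ {P Q : Set Ω}, MeasurableSet P → MeasurableSet Q →
      ∀ (σ : ℝ → ℝ), Measurable σ →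
      (∫⁻ x in P, (∫⁻ t : ℝ, Q.indicator (fun _ => (1:ℝ≥0∞)) (a (σ t) x)) ∂m)
        = ∫⁻ t : ℝ, m ((a (σ t)) ⁻¹' Q ∩ P) := by
    intro P Q hP hQ σ hσ
    have hu : Measurable (Function.uncurry
        fun (x : Ω) (t : ℝ) => Q.indicator (fun _ => (1:ℝ≥0∞)) (a (σ t) x)) :=
      (hindm hQ).comp (hmeas.comp ((hσ.comp measurable_snd).prodMk measurable_fst))
    rw [lintegral_lintegral_swap hu.aemeasurable]
    refine lintegral_congr fun t => ?_
    have hpm : MeasurableSet ((a (σ t)) ⁻¹' Q) := hQ.preimage (hmp (σ t)).measurable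
    have h2 : (fun x : Ω => Q.indicator (fun _ => (1:ℝ≥0∞)) (a (σ t) x))
        = ((a (σ t)) ⁻¹' Q).indicator (fun _ => (1:ℝ≥0∞)) := by
      funext x
      by_cases hx : a (σ t) x ∈ Q
      · rw [Set.indicator_of_mem hx,
          Set.indicator_of_mem (show x ∈ (a (σ t)) ⁻¹' Q from hx)]
      · rw [Set.indicator_of_notMem hx,
          Set.indicator_of_notMem (show x ∉ (a (σ t)) ⁻¹' Q from hx)]
    rw [h2, lintegral_indicator hpm, setLIntegral_const, one_mul,
      Measure.restrict_apply hpm]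
  -- measure-preserving symmetry for preimages
  have hpre : ∀ (s : ℝ) {P Q : Set Ω}, MeasurableSet P → MeasurableSet Q →
      m ((a s) ⁻¹' Q ∩ P) = m ((a (-s)) ⁻¹' P ∩ Q) := by
    intro s P Q hP hQ
    have h1 := (hmp (-s)).measure_preimage
      (((hQ.preimage (hmp s).measurable).inter hP).nullMeasurableSet)
    have h2 : (a (-s)) ⁻¹' ((a s) ⁻¹' Q ∩ P) = Q ∩ (a (-s)) ⁻¹' P := by
      rw [Set.preimage_inter]
      congr 1
      ext y
      simp only [Set.mem_preimage, hcancel s y]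
    rw [h2] at h1
    rw [← h1, Set.inter_comm]
  -- the key duality
  have hkey : ∀ {P Q : Set Ω}, MeasurableSet P → MeasurableSet Q →
      (∫⁻ x in P, f Q x ∂m) = ∫⁻ y in Q, f P y ∂m := by
    intro P Q hP hQ
    have h1 : (∫⁻ x in P, f Q x ∂m)
        = ∫⁻ x in P, (∫⁻ t : ℝ, Q.indicator (fun _ => (1:ℝ≥0∞)) (a (-t) x)) ∂m :=
      lintegral_congr fun x => (hfneg hQ x).symm
    have h3 := hswap hP hQ (fun t => -t) measurable_neg
    have h4 := hswap hQ hP (fun t => t) measurable_id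
    rw [h1, h3]
    have h5 : ∀ t : ℝ, m ((a (-t)) ⁻¹' Q ∩ P) = m ((a t) ⁻¹' P ∩ Q) := by
      intro t
      have := hpre (-t) hP hQ
      rwa [neg_neg] at this
    rw [lintegral_congr h5, ← h4]
  -- monotonicity of occupation time
  have hmono : ∀ {S T : Set Ω}, S ⊆ T → ∀ x : Ω, f S x ≤ f T x := by
    intro S T hST x
    exact lintegral_mono fun t =>
      Set.indicator_le_indicator_of_subset hST (fun _ => zero_le) _
  -- reduce hrec to a countable family of open sets with finite measure
  obtain ⟨b, hbcount, -, hbasis⟩ := TopologicalSpace.exists_countable_basis Ω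
  have hrec' : ∀ᵐ x ∂m, ∃ u ∈ b, m u < ⊤ ∧ f u x = ⊤ := by
    filter_upwards [hrec] with x hx
    obtain ⟨K, hK, hKint⟩ := hx
    have hKm : m K < ⊤ := hK.measure_lt_top
    obtain ⟨V, hKV, hVopen, hVm⟩ := Set.exists_isOpen_lt_of_lt K (m K + 1)
      (ENNReal.lt_add_right hKm.ne one_ne_zero)
    have hcover : K ⊆ ⋃ i : {u : Set Ω // u ∈ b ∧ u ⊆ V}, (i : Set Ω) := by
      intro y hy
      obtain ⟨u, hub, hyu, huV⟩ := hbasis.exists_subset_of_mem_open (hKV hy) hVopen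
      exact Set.mem_iUnion.2 ⟨⟨u, hub, huV⟩, hyu⟩
    obtain ⟨s, hs⟩ := hK.elim_finite_subcover
      (fun i : {u : Set Ω // u ∈ b ∧ u ⊆ V} => (i : Set Ω))
      (fun i => hbasis.isOpen i.2.1) hcover
    have hle : f K x ≤ ∑ i ∈ s, f (i : Set Ω) x := by
      have hpt : ∀ t : ℝ, K.indicator (fun _ => (1:ℝ≥0∞)) (a t x)
          ≤ ∑ i ∈ s, ((i : Set Ω)).indicator (fun _ => (1:ℝ≥0∞)) (a t x) := by
        intro t
        by_cases ht : a t x ∈ K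
        · obtain ⟨i, hi, hmem⟩ := Set.mem_iUnion₂.1 (hs ht)
          calc K.indicator (fun _ => (1:ℝ≥0∞)) (a t x) = 1 := Set.indicator_of_mem ht _
            _ = ((i : Set Ω)).indicator (fun _ => (1:ℝ≥0∞)) (a t x) :=
              (Set.indicator_of_mem hmem (fun _ => (1:ℝ≥0∞))).symm
            _ ≤ _ := Finset.single_le_sum
              (f := fun j : {u : Set Ω // u ∈ b ∧ u ⊆ V} => ((j : Set Ω)).indicator (fun _ => (1:ℝ≥0∞)) (a t x))
              (fun j _ => zero_le) hi
        · rw [Set.indicator_of_notMem ht]; exact zero_le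
      calc f K x ≤ ∫⁻ t : ℝ, ∑ i ∈ s, ((i : Set Ω)).indicator (fun _ => (1:ℝ≥0∞)) (a t x) :=
            lintegral_mono hpt
        _ = ∑ i ∈ s, f (i : Set Ω) x :=
            lintegral_finset_sum _ (fun i _ => hfix (hbasis.isOpen i.2.1).measurableSet x)
    have hex : ∃ i ∈ s, f (i : Set Ω) x = ⊤ := by
      by_contra hcon
      push_neg at hcon
      have hlt : ∑ i ∈ s, f (i : Set Ω) x < ⊤ :=
        ENNReal.sum_lt_top.2 fun i hi => lt_top_iff_ne_top.2 (hcon i hi)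
      have : f K x = ⊤ := hKint
      rw [this] at hle
      exact absurd (hle.trans_lt hlt) (lt_irrefl _)
    obtain ⟨i, _, hitop⟩ := hex
    have hVtop : m V < ⊤ := lt_trans hVm (ENNReal.add_lt_top.2 ⟨hKm, ENNReal.one_lt_top⟩)
    exact ⟨i, i.2.1, lt_of_le_of_lt (measure_mono i.2.2) hVtop, hitop⟩
  -- finite occupation on B
  have hBfin' : ∀ᵐ x ∂m, x ∈ B → f B x < ⊤ := (ae_restrict_iff' hBmeas).1 hBfin
  have hae : ∀ᵐ x ∂m, x ∈ B → (f B x < ⊤ ∧ ∃ u ∈ b, m u < ⊤ ∧ f u x = ⊤) := by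
    filter_upwards [hBfin', hrec'] with x h1 h2 hxB
    exact ⟨h1 hxB, h2⟩
  -- the wandering pieces
  set W : Set Ω → ℕ → Set Ω :=
    fun u N => B ∩ {x | f B x ≤ (N : ℝ≥0∞)} ∩ {x | f u x = ⊤} with hWdef
  have hWmeas : ∀ (u : Set Ω), MeasurableSet u → ∀ N : ℕ, MeasurableSet (W u N) := by
    intro u hu N
    exact (hBmeas.inter (measurableSet_le (hfmeas hBmeas) measurable_const)).inter
      ((hfmeas hu) (measurableSet_singleton ⊤))
  -- a piece of positive measure exists
  set E : Set Ω := {x | x ∈ B → (f B x < ⊤ ∧ ∃ u ∈ b, m u < ⊤ ∧ f u x = ⊤)} with hEdef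
  have hEc : m Eᶜ = 0 := by
    rw [hEdef, Set.compl_setOf]
    exact ae_iff.1 hae
  have hBsub : B ∩ E ⊆ ⋃ u ∈ {u ∈ b | m u < ⊤}, ⋃ N : ℕ, W u N := by
    rintro x ⟨hxB, hxE⟩
    obtain ⟨hfin, u, hub, hum, hutop⟩ := hxE hxB
    obtain ⟨N, hN⟩ := ENNReal.exists_nat_gt hfin.ne
    exact Set.mem_biUnion ⟨hub, hum⟩ (Set.mem_iUnion.2 ⟨N, ⟨⟨hxB, hN.le⟩, hutop⟩⟩)
  have hexpos : ∃ u ∈ {u ∈ b | m u < ⊤}, ∃ N : ℕ, m (W u N) ≠ 0 := by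
    by_contra hcon
    push_neg at hcon
    have h1 : m (⋃ u ∈ {u ∈ b | m u < ⊤}, ⋃ N : ℕ, W u N) = 0 :=
      (measure_biUnion_null_iff (hbcount.mono (Set.sep_subset _ _))).2
        fun u hu => measure_iUnion_null fun N => hcon u hu N
    have h2 : m (B ∩ E) = 0 := measure_mono_null hBsub h1
    have h3 : m (B \ E) = 0 := measure_mono_null (fun x hx => hx.2) hEc
    have h4 : m B ≤ m (B ∩ E) + m (B \ E) := by
      conv_lhs => rw [← Set.inter_union_diff B E]
      exact measure_union_le _ _
    rw [h2, h3, add_zero] at h4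
    exact hB0 (le_antisymm h4 (zero_le))
  obtain ⟨u, ⟨hub, hum⟩, N, hWpos⟩ := hexpos
  have humeas : MeasurableSet u := (hbasis.isOpen hub).measurableSet
  have hWm : MeasurableSet (W u N) := hWmeas u humeas N
  -- everywhere bound on occupation of W u N
  have hWsubB : W u N ⊆ B := fun x hx => hx.1.1
  have hWbound : ∀ y : Ω, f (W u N) y ≤ (N : ℝ≥0∞) := by
    intro y
    by_cases hy : ∃ s : ℝ, a s y ∈ W u N
    · obtain ⟨s, hs⟩ := hy
      calc f (W u N) y = f (W u N) (a s y) := (hfinv hWm s y).symm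
        _ ≤ f B (a s y) := hmono hWsubB _
        _ ≤ (N : ℝ≥0∞) := hs.1.2
    · push_neg at hy
      have hz : ∀ t : ℝ, (W u N).indicator (fun _ => (1:ℝ≥0∞)) (a t y) = 0 :=
        fun t => Set.indicator_of_notMem (hy t) _
      have : f (W u N) y = 0 := by
        rw [hfdef]
        simp only [hz]
        exact lintegral_zero
      rw [this]; exact zero_le
  -- the contradiction
  have htop : (∫⁻ x in W u N, f u x ∂m) = ⊤ := by
    have h1 : (∫⁻ x in W u N, f u x ∂m) = ∫⁻ _ in W u N, (⊤ : ℝ≥0∞) ∂m :=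
      setLIntegral_congr_fun hWm (fun x hx => hx.2)
    rw [h1, setLIntegral_const]
    exact ENNReal.top_mul hWpos
  have hfin2 : (∫⁻ x in W u N, f u x ∂m) < ⊤ := by
    rw [hkey hWm humeas]
    calc (∫⁻ y in u, f (W u N) y ∂m) ≤ ∫⁻ _ in u, (N : ℝ≥0∞) ∂m :=
          lintegral_mono fun y => hWbound y
      _ = (N : ℝ≥0∞) * m u := setLIntegral_const _ _
      _ < ⊤ := ENNReal.mul_lt_top (by simp) hum
  rw [htop] at hfin2
  exact absurd hfin2 (lt_irrefl _)
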